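/- For a real symmetric positive semidefinite matrix F, if a unit vector w satisfies wᵀFw = trace F, then F = (trace F) · w wᵀ, i.e., F is rank at most one with range spanned by w. -/

import Mathlib

open scoped RealInnerProductSpace

theorem rank_one_of_saturation (N : ℕ) (F : Matrix (Fin N) (Fin N) ℝ)
    (hsymm : F.IsSymm) (hpsd : F.PosSemidef)
    (w : EuclideanSpace ℝ (Fin N)) (hw : ‖w‖ = 1)
    (hwF : ⟪w, (WithLp.toLp 2 (F.mulVec w) : EuclideanSpace ℝ (Fin N))⟫ = Matrix.trace F) :
    ∀ i j, F i j = Matrix.trace F * w i * w j := by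
  classical
  set t := Matrix.trace F with htdef
  have hsymm' : ∀ i j, F j i = F i j := fun i j => by
    conv_lhs => rw [← hsymm]
    rfl
  have hww : ∑ i, w i * w i = 1 := by
    have h := real_inner_self_eq_norm_sq w
    rw [hw] at h
    rw [← one_pow 2, ← h]; simp only [PiLp.inner_apply, RCLike.inner_apply, conj_trivial]
  have ht : ∑ i, w i * (F.mulVec w) i = t := by
    simpa [PiLp.inner_apply, RCLike.inner_apply, mul_comm] using hwF
  -- the test vectors
  set v : Fin N → (Fin N → ℝ) := fun i => Pi.single i 1 - w i • (WithLp.equiv 2 _ w : Fin N → ℝ) with hv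
  have hq : ∀ i, dotProduct (v i) (F.mulVec (v i)) =
      F i i - 2 * (w i * (F.mulVec w) i) + w i * w i * (∑ j, w j * (F.mulVec w) j) := by
    intro i
    have hwe : (WithLp.equiv 2 (Fin N → ℝ)) w = w := rfl
    simp only [hv, Matrix.mulVec_sub, Matrix.mulVec_smul, sub_dotProduct,
      dotProduct_sub, dotProduct_smul, smul_dotProduct,
      single_dotProduct, Matrix.mulVec_single_one, Matrix.col_apply, one_mul, mul_one, smul_eq_mul, hwe]
    have e1 : dotProduct (w : Fin N → ℝ) (F.col i) = (F.mulVec w) i := by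
      simp only [dotProduct, Matrix.mulVec, Matrix.col_apply]
      refine Finset.sum_congr rfl fun k _ => ?_
      rw [hsymm' i k]; ring
    have e2 : dotProduct (w : Fin N → ℝ) (F.mulVec w) = ∑ j, w j * (F.mulVec w) j := rfl
    rw [e1, e2]
    ring
  have hsum : ∑ i, dotProduct (v i) (F.mulVec (v i)) = 0 := by
    have htr : ∑ i, F i i = t := rfl
    rw [Finset.sum_congr rfl fun i _ => hq i]
    rw [Finset.sum_add_distrib, Finset.sum_sub_distrib]
    rw [← Finset.sum_mul, hww, htr, ht, ← Finset.mul_sum, ht]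
    ring
  have hnonneg : ∀ i, 0 ≤ dotProduct (v i) (F.mulVec (v i)) := fun i => by
    simpa using hpsd.dotProduct_mulVec_nonneg (v i)
  have hzero : ∀ i, dotProduct (v i) (F.mulVec (v i)) = 0 := by
    intro i
    have := (Finset.sum_eq_zero_iff_of_nonneg (fun i _ => hnonneg i)).mp hsum i (Finset.mem_univ i)
    exact this
  have hker : ∀ i, F.mulVec (v i) = 0 := by
    intro i
    have := (hpsd.dotProduct_mulVec_zero_iff (v i)).mp (by simpa using hzero i)
    exact this
  have hcol : ∀ i j, F j i = w i * (F.mulVec w) j := by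
    intro i j
    have h := hker i
    rw [hv] at h
    simp only [Matrix.mulVec_sub, Matrix.mulVec_smul, sub_eq_zero] at h
    have := congrFun h j
    simpa [Matrix.mulVec_single_one] using this
  have heig : ∀ i, (F.mulVec w) i = w i * t := by
    intro i
    calc (F.mulVec w) i = ∑ j, w j * w j * (F.mulVec w) i := by
          rw [← Finset.sum_mul, hww, one_mul]
      _ = ∑ j, w j * (w i * (F.mulVec w) j) := by
          refine Finset.sum_congr rfl fun j _ => ?_
          have h1 : F i j = w j * (F.mulVec w) i := hcol j i
          have h2 : F i j = w i * (F.mulVec w) j := by rw [hsymm' j i]; exact hcol i j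
          calc w j * w j * (F.mulVec w) i = w j * (w j * (F.mulVec w) i) := by ring
            _ = w j * (w i * (F.mulVec w) j) := by rw [← h1, h2]
      _ = w i * ∑ j, w j * (F.mulVec w) j := by rw [Finset.mul_sum]; exact Finset.sum_congr rfl fun j _ => by ring
      _ = w i * t := by rw [ht]
  intro i j
  have := hcol j i
  rw [heig] at this
  rw [this]; ring
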